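/- Let γ ∈ (0,1) and 0 < L_R ≤ U_R. Let (R_t)_{t∈ℕ} be real-valued random variables on a probability space with L_R ≤ R_t ≤ U_R almost surely for every t, and let T be an ℕ-valued random variable, independent of the σ-algebra generated by (R_t)_{t∈ℕ}, with P(T = t) = (1 − γ^{1/2}) γ^{t/2} for every t ∈ ℕ. Then the random truncated discounted sum Q̂ := ∑_{t=0}^{T} γ^{t/2} R_t has variance bounded below as Var(Q̂) ≥ L_R² · γ³ (1 − γ^{1/2}) / ( (1 − γ^{3/2}) (1 − γ)² ). -/

import Mathlib

open MeasureTheory ProbabilityTheory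

private lemma finite_var_identity (A : Finset ℕ) (p c : ℕ → ℝ) :
    ∑ x ∈ A ×ˢ A, p x.1 * p x.2 * (c x.1 - c x.2) ^ 2 =
      2 * ((∑ n ∈ A, p n) * (∑ n ∈ A, p n * c n ^ 2)) - 2 * (∑ n ∈ A, p n * c n) ^ 2 := by
  have h : ∀ x ∈ A ×ˢ A, p x.1 * p x.2 * (c x.1 - c x.2) ^ 2
      = p x.1 * c x.1 ^ 2 * p x.2 + p x.1 * (p x.2 * c x.2 ^ 2)
        - 2 * ((p x.1 * c x.1) * (p x.2 * c x.2)) := fun x _ => by ring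
  rw [Finset.sum_congr rfl h, Finset.sum_sub_distrib, Finset.sum_add_distrib,
    Finset.sum_product, Finset.sum_product, Finset.sum_product]
  simp_rw [← Finset.mul_sum]
  simp_rw [← Finset.sum_mul]
  ring

private lemma pair_sum_le (K : ℕ) (q : ℕ × ℕ → ℝ) (hq : ∀ x, 0 ≤ q x)
    (hsymm : ∀ n m, q (n, m) = q (m, n)) :
    2 * ∑ y ∈ Finset.range K ×ˢ Finset.range K, q (y.1, y.1 + y.2 + 1) ≤
      ∑ x ∈ Finset.range (2 * K) ×ˢ Finset.range (2 * K), q x := by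
  classical
  set B := Finset.range K ×ˢ Finset.range K with hB
  set Φ : ℕ × ℕ → ℕ × ℕ := fun y => (y.1, y.1 + y.2 + 1) with hΦ
  set Ψ : ℕ × ℕ → ℕ × ℕ := fun y => (y.1 + y.2 + 1, y.1) with hΨ
  have hΦinj : ∀ x ∈ B, ∀ y ∈ B, Φ x = Φ y → x = y := by
    intro a _ b _ hab
    simp only [hΦ, Prod.mk.injEq] at hab
    exact Prod.ext hab.1 (by omega)
  have hΨinj : ∀ x ∈ B, ∀ y ∈ B, Ψ x = Ψ y → x = y := by
    intro a _ b _ hab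
    simp only [hΨ, Prod.mk.injEq] at hab
    exact Prod.ext hab.2 (by omega)
  have h1 : ∑ y ∈ B, q (Φ y) = ∑ x ∈ B.image Φ, q x := (Finset.sum_image hΦinj).symm
  have h2 : ∑ y ∈ B, q (Ψ y) = ∑ x ∈ B.image Ψ, q x := (Finset.sum_image hΨinj).symm
  have hQsame : ∀ y ∈ B, q (Ψ y) = q (Φ y) := fun y _ => hsymm _ _
  have hdisj : Disjoint (B.image Φ) (B.image Ψ) := by
    rw [Finset.disjoint_left]
    intro x hx hx'
    simp only [Finset.mem_image] at hx hx'
    obtain ⟨a, _, ha⟩ := hx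
    obtain ⟨b, _, hb⟩ := hx'
    have h1 : x.1 < x.2 := by rw [← ha]; simp [hΦ]
    have h2 : x.2 < x.1 := by rw [← hb]; simp [hΨ]
    omega
  have hsub : B.image Φ ∪ B.image Ψ ⊆ Finset.range (2 * K) ×ˢ Finset.range (2 * K) := by
    intro x hx
    rw [Finset.mem_union] at hx
    rcases hx with hx | hx <;>
    · simp only [Finset.mem_image, hB, Finset.mem_product, Finset.mem_range] at hx ⊢
      obtain ⟨a, ⟨ha1, ha2⟩, ha⟩ := hx
      subst ha
      simp only [hΦ, hΨ]
      omega
  calc 2 * ∑ y ∈ B, q (Φ y) = ∑ y ∈ B, q (Φ y) + ∑ y ∈ B, q (Ψ y) := by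
        rw [Finset.sum_congr rfl hQsame]; ring
    _ = ∑ x ∈ B.image Φ ∪ B.image Ψ, q x := by
        rw [h1, h2, Finset.sum_union hdisj]
    _ ≤ ∑ x ∈ Finset.range (2 * K) ×ˢ Finset.range (2 * K), q x :=
        Finset.sum_le_sum_of_subset_of_nonneg hsub (fun x _ _ => hq x)

set_option maxHeartbeats 2000000 in
private lemma aux_var_lower_bound {Ω : Type*} {mΩ : MeasurableSpace Ω} (μ : Measure Ω)
    [IsProbabilityMeasure μ]
    (s LR UR : ℝ) (hs0 : 0 < s) (hs1 : s < 1) (hLR : 0 < LR) (hLRUR : LR ≤ UR)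
    (R : ℕ → Ω → ℝ) (hRmeas : ∀ t, Measurable (R t))
    (hRbdd : ∀ t, ∀ᵐ ω ∂μ, LR ≤ R t ω ∧ R t ω ≤ UR)
    (T : Ω → ℕ) (hTmeas : Measurable T)
    (hTdist : ∀ t : ℕ, μ {ω | T ω = t} = ENNReal.ofReal ((1 - s) * s ^ t))
    (hindep : Indep (MeasurableSpace.comap T inferInstance)
      (⨆ t : ℕ, MeasurableSpace.comap (R t) inferInstance) μ) :
    LR ^ 2 * s ^ 3 / ((1 - s) ^ 2 * (1 + s) ^ 2 * (1 + s + s ^ 2)) ≤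
      variance (fun ω => ∑ t ∈ Finset.range (T ω + 1), s ^ t * R t ω) μ := by
  classical
  have hU0 : 0 < UR := lt_of_lt_of_le hLR hLRUR
  have h1ms : (0:ℝ) < 1 - s := by linarith
  set M : ℝ := UR / (1 - s) with hM
  have hM0 : 0 < M := div_pos hU0 h1ms
  set f : ℕ → Ω → ℝ := fun n ω => ∑ t ∈ Finset.range (n + 1), s ^ t * R t ω with hf
  have hgeo : ∀ n : ℕ, (1 - s) * ∑ t ∈ Finset.range n, s ^ t = 1 - s ^ n := by
    intro n
    have h := geom_sum_mul s n
    linear_combination -h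
  have hgsum_nonneg : ∀ n : ℕ, 0 ≤ ∑ t ∈ Finset.range n, s ^ t :=
    fun n => Finset.sum_nonneg fun t _ => (pow_pos hs0 t).le
  have hgsum_le : ∀ n : ℕ, ∑ t ∈ Finset.range n, s ^ t ≤ 1 / (1 - s) := by
    intro n
    rw [le_div_iff₀ h1ms]
    have h := hgeo n
    have hsn : 0 ≤ s ^ n := (pow_pos hs0 n).le
    nlinarith
  have hae : ∀ᵐ ω ∂μ, ∀ t, LR ≤ R t ω ∧ R t ω ≤ UR := ae_all_iff.2 hRbdd
  have hfb : ∀ᵐ ω ∂μ, ∀ n, 0 ≤ f n ω ∧ f n ω ≤ M := by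
    filter_upwards [hae] with ω hω
    intro n
    constructor
    · exact Finset.sum_nonneg fun t _ => mul_nonneg (pow_pos hs0 t).le
        (le_trans hLR.le (hω t).1)
    · calc f n ω ≤ ∑ t ∈ Finset.range (n+1), s ^ t * UR :=
            Finset.sum_le_sum fun t _ => mul_le_mul_of_nonneg_left (hω t).2 (pow_pos hs0 t).le
        _ = (∑ t ∈ Finset.range (n+1), s ^ t) * UR := by rw [Finset.sum_mul]
        _ ≤ (1 / (1 - s)) * UR := mul_le_mul_of_nonneg_right (hgsum_le _) hU0.le
        _ = M := by rw [hM]; ring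
  have hfmeas : ∀ n, Measurable (f n) := fun n =>
    Finset.measurable_sum _ fun t _ => (hRmeas t).const_mul _
  set X : Ω → ℝ := fun ω => f (T ω) ω with hX
  suffices hsuff : LR ^ 2 * s ^ 3 / ((1 - s) ^ 2 * (1 + s) ^ 2 * (1 + s + s ^ 2)) ≤
      variance X μ by exact hsuff
  have hXmeas : Measurable X := by
    have h : Measurable (fun q : Ω × ℕ => f q.2 q.1) :=
      measurable_from_prod_countable_left fun n => hfmeas n
    exact h.comp (measurable_id.prodMk hTmeas)
  have hXb : ∀ᵐ ω ∂μ, 0 ≤ X ω ∧ X ω ≤ M := by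
    filter_upwards [hfb] with ω hω; exact hω (T ω)
  have hnormbound : ∀ᵐ ω ∂μ, ‖X ω‖ ≤ M := by
    filter_upwards [hXb] with ω hω
    rw [Real.norm_eq_abs, abs_le]; exact ⟨by linarith [hω.1], hω.2⟩
  have hXmem2 : MemLp X 2 μ := MemLp.of_bound hXmeas.aestronglyMeasurable M hnormbound
  have hXint : Integrable X μ := memLp_one_iff_integrable.1
    (MemLp.of_bound hXmeas.aestronglyMeasurable M hnormbound)
  have hX2int : Integrable (fun ω => X ω ^ 2) μ := hXmem2.integrable_sq
  have hfnorm : ∀ n, ∀ᵐ ω ∂μ, ‖f n ω‖ ≤ M := by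
    intro n; filter_upwards [hfb] with ω hω
    rw [Real.norm_eq_abs, abs_le]; exact ⟨by linarith [(hω n).1], (hω n).2⟩
  have hfint : ∀ n, Integrable (f n) μ := fun n => memLp_one_iff_integrable.1
    (MemLp.of_bound (hfmeas n).aestronglyMeasurable M (hfnorm n))
  have hfmem2 : ∀ n, MemLp (f n) 2 μ := fun n =>
    MemLp.of_bound (hfmeas n).aestronglyMeasurable M (hfnorm n)
  have hf2int : ∀ n, Integrable (fun ω => f n ω ^ 2) μ := fun n => (hfmem2 n).integrable_sq
  set p : ℕ → ℝ := fun n => (1 - s) * s ^ n with hp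
  have hp0 : ∀ n, 0 ≤ p n := fun n => mul_nonneg h1ms.le (pow_pos hs0 n).le
  set E : ℕ → Set Ω := fun n => T ⁻¹' {n} with hE
  have hEmeas : ∀ n, MeasurableSet (E n) := fun n => hTmeas (measurableSet_singleton n)
  have hEμ : ∀ n, μ (E n) = ENNReal.ofReal (p n) := by
    intro n
    have h : E n = {ω | T ω = n} := by ext ω; simp [hE]
    rw [h, hTdist n]
  have hEreal : ∀ n, (μ (E n)).toReal = p n := fun n => by
    rw [hEμ n, ENNReal.toReal_ofReal (hp0 n)]
  have hfsup : ∀ n, Measurable[⨆ t, MeasurableSpace.comap (R t) inferInstance] (f n) := by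
    intro n
    apply Finset.measurable_sum
    intro t _
    have h1 : Measurable[MeasurableSpace.comap (R t) inferInstance] (R t) :=
      fun u hu => ⟨u, hu, rfl⟩
    exact (h1.mono (le_iSup (fun t => MeasurableSpace.comap (R t) inferInstance) t)
      le_rfl).const_mul _
  have hIndF : ∀ n, IndepFun T (f n) μ := by
    intro n
    rw [indepFun_iff_measure_inter_preimage_eq_mul]
    intro u v hu hv
    exact (Indep_iff _ _ μ).1 hindep _ _ ⟨u, hu, rfl⟩ (hfsup n hv)
  have hfact : ∀ (n : ℕ) (h : ℝ → ℝ), Measurable h → Integrable (fun ω => h (f n ω)) μ →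
      ∫ ω in E n, h (f n ω) ∂μ = p n * ∫ ω, h (f n ω) ∂μ := by
    intro n h hh hint
    set φ : ℕ → ℝ := Set.indicator ({n} : Set ℕ) (fun _ => (1:ℝ)) with hφ
    have hφmeas : Measurable φ := measurable_const.indicator (measurableSet_singleton n)
    have hIF : IndepFun (fun ω => φ (T ω)) (fun ω => h (f n ω)) μ :=
      (hIndF n).comp hφmeas hh
    have hφT : (fun ω => φ (T ω)) = (E n).indicator (fun _ => (1:ℝ)) := by
      funext ω
      by_cases hω : T ω = n <;> simp [hφ, hE, Set.indicator, hω]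
    have hφint : Integrable (fun ω => φ (T ω)) μ := by
      rw [hφT]; exact (integrable_const (1:ℝ)).indicator (hEmeas n)
    have hmul := hIF.integral_fun_mul_eq_mul_integral hφint.aestronglyMeasurable hint.aestronglyMeasurable
    have hlhs : (fun ω => φ (T ω) * h (f n ω)) = (E n).indicator (fun ω => h (f n ω)) := by
      funext ω
      by_cases hω : T ω = n <;> simp [hφ, hE, Set.indicator, hω]
    have h1 : ∫ ω, φ (T ω) ∂μ = p n := by
      rw [hφT, integral_indicator_const (1:ℝ) (hEmeas n), measureReal_def, hEreal n, smul_eq_mul, mul_one]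
    calc ∫ ω in E n, h (f n ω) ∂μ = ∫ ω, (E n).indicator (fun ω => h (f n ω)) ω ∂μ :=
          (integral_indicator (hEmeas n)).symm
      _ = ∫ ω, φ (T ω) * h (f n ω) ∂μ := by rw [← hlhs]
      _ = (∫ ω, φ (T ω) ∂μ) * ∫ ω, h (f n ω) ∂μ := hmul
      _ = p n * ∫ ω, h (f n ω) ∂μ := by rw [h1]
  set c : ℕ → ℝ := fun n => ∫ ω, f n ω ∂μ with hc
  have hc0 : ∀ n, 0 ≤ c n := fun n => integral_nonneg_of_ae (hfb.mono fun ω hω => (hω n).1)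
  have hcM : ∀ n, c n ≤ M := by
    intro n
    have h := integral_mono_ae (hfint n) (integrable_const M) (hfb.mono fun ω hω => (hω n).2)
    simpa using h
  have hIA : ∀ n, ∫ ω in E n, f n ω ∂μ = p n * c n := fun n =>
    hfact n id measurable_id (hfint n)
  have hIB : ∀ n, p n * c n ^ 2 ≤ ∫ ω in E n, f n ω ^ 2 ∂μ := by
    intro n
    have h2 : ∫ ω in E n, f n ω ^ 2 ∂μ = p n * ∫ ω, f n ω ^ 2 ∂μ :=
      hfact n (fun x => x ^ 2) (measurable_id.pow_const 2) (hf2int n)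
    have h3 : c n ^ 2 ≤ ∫ ω, f n ω ^ 2 ∂μ := by
      have hv := variance_nonneg (f n) μ
      rw [variance_eq_sub (hfmem2 n)] at hv
      have he : (f n ^ 2) = fun ω => f n ω ^ 2 := rfl
      rw [he] at hv
      linarith
    rw [h2]
    exact mul_le_mul_of_nonneg_left h3 (hp0 n)
  have hcincr : ∀ n d : ℕ,
      LR * (s ^ (n+1) * ∑ j ∈ Finset.range (d+1), s ^ j) ≤ c (n+d+1) - c n := by
    intro n d
    have hsub : ∀ ω, f (n+d+1) ω - f n ω = ∑ t ∈ Finset.Ico (n+1) (n+d+2), s ^ t * R t ω := by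
      intro ω
      rw [Finset.sum_Ico_eq_sub _ (by omega : n+1 ≤ n+d+2)]
    have key : ∀ᵐ ω ∂μ, LR * (s ^ (n+1) * ∑ j ∈ Finset.range (d+1), s ^ j)
        ≤ f (n+d+1) ω - f n ω := by
      filter_upwards [hae] with ω hω
      rw [hsub ω]
      have h1 : ∑ t ∈ Finset.Ico (n+1) (n+d+2), s ^ t * LR
          ≤ ∑ t ∈ Finset.Ico (n+1) (n+d+2), s ^ t * R t ω :=
        Finset.sum_le_sum fun t _ => mul_le_mul_of_nonneg_left (hω t).1 (pow_pos hs0 t).le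
      have h2 : ∑ t ∈ Finset.Ico (n+1) (n+d+2), s ^ t * LR
          = LR * (s ^ (n+1) * ∑ j ∈ Finset.range (d+1), s ^ j) := by
        rw [Finset.sum_Ico_eq_sum_range]
        have hd : n+d+2 - (n+1) = d+1 := by omega
        rw [hd, Finset.mul_sum, Finset.mul_sum]
        exact Finset.sum_congr rfl fun j _ => by rw [pow_add]; ring
      linarith
    have h3 := integral_mono_ae (integrable_const _) ((hfint (n+d+1)).sub (hfint n)) key
    simp only [Pi.sub_apply] at h3
    rw [integral_sub (hfint _) (hfint _)] at h3
    have hcdef : ∀ m : ℕ, (∫ ω, f m ω ∂μ) = c m := fun m => rfl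
    rw [hcdef, hcdef] at h3
    simpa using h3
  -- main finite-stage bound
  have main : ∀ K : ℕ,
      LR ^ 2 * ((∑ n ∈ Finset.range K, (s^4) ^ n) *
        (∑ d ∈ Finset.range K, s ^ (d+3) * (1 - s ^ (d+1)) ^ 2)) - 3 * M ^ 2 * s ^ (2*K)
      ≤ variance X μ := by
    intro K
    set A := Finset.range (2*K) with hA
    set P := ∑ n ∈ A, p n with hPdef
    set S1 := ∑ n ∈ A, p n * c n with hS1
    set S2 := ∑ n ∈ A, p n * c n ^ 2 with hS2
    set U : Set Ω := ⋃ n ∈ A, E n with hU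
    have hUmeas : MeasurableSet U := A.measurableSet_biUnion (fun n _ => hEmeas n)
    have hEdisj : (↑A : Set ℕ).PairwiseDisjoint E := by
      intro a _ b _ hab
      apply Set.disjoint_left.2
      intro ω hωa hωb
      simp only [hE, Set.mem_preimage, Set.mem_singleton_iff] at hωa hωb
      exact hab (by rw [← hωa, ← hωb])
    have hPsum : P = 1 - s ^ (2*K) := by
      rw [hPdef, hA]
      calc ∑ n ∈ Finset.range (2*K), p n
          = (1 - s) * ∑ n ∈ Finset.range (2*K), s ^ n := by
            rw [Finset.mul_sum]
        _ = 1 - s ^ (2*K) := hgeo _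
    have hsN0 : (0:ℝ) ≤ s ^ (2*K) := (pow_pos hs0 _).le
    have hsN1 : s ^ (2*K) ≤ 1 := pow_le_one₀ hs0.le hs1.le
    -- step 1 : S2 ≤ ∫ X²
    have hXE : ∀ n, ∫ ω in E n, X ω ^ 2 ∂μ = ∫ ω in E n, f n ω ^ 2 ∂μ := by
      intro n
      apply setIntegral_congr_fun (hEmeas n)
      intro ω hω
      simp only [hE, Set.mem_preimage, Set.mem_singleton_iff] at hω
      simp only [hX, hω]
    have hstep1 : S2 ≤ ∫ ω, X ω ^ 2 ∂μ := by
      have h1 : ∀ n ∈ A, p n * c n ^ 2 ≤ ∫ ω in E n, X ω ^ 2 ∂μ := fun n _ => by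
        rw [hXE n]; exact hIB n
      have h2 : S2 ≤ ∑ n ∈ A, ∫ ω in E n, X ω ^ 2 ∂μ := Finset.sum_le_sum h1
      have h3 : ∑ n ∈ A, ∫ ω in E n, X ω ^ 2 ∂μ = ∫ ω in U, X ω ^ 2 ∂μ :=
        (integral_biUnion_finset A (fun n _ => hEmeas n) hEdisj
          (fun n _ => hX2int.integrableOn)).symm
      have h4 : ∫ ω in U, X ω ^ 2 ∂μ ≤ ∫ ω, X ω ^ 2 ∂μ :=
        setIntegral_le_integral hX2int (Filter.Eventually.of_forall fun ω => sq_nonneg _)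
      linarith
    -- step 2 : ∫ X = S1 + r
    have hμU : μ U = ENNReal.ofReal (1 - s ^ (2*K)) := by
      rw [hU, measure_biUnion_finset hEdisj (fun n _ => hEmeas n),
        Finset.sum_congr rfl (fun n _ => hEμ n),
        ← ENNReal.ofReal_sum_of_nonneg (fun n _ => hp0 n)]
      rw [← hPdef, hPsum]
    have hμUc : (μ Uᶜ).toReal = s ^ (2*K) := by
      rw [measure_compl hUmeas (measure_ne_top μ U), measure_univ, hμU,
        ENNReal.toReal_sub_of_le (ENNReal.ofReal_le_one.2 (by linarith)) ENNReal.one_ne_top,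
        ENNReal.toReal_one, ENNReal.toReal_ofReal (by linarith)]
      ring
    set r := ∫ ω in Uᶜ, X ω ∂μ with hr
    have hXEn : ∀ n, ∫ ω in E n, X ω ∂μ = ∫ ω in E n, f n ω ∂μ := by
      intro n
      apply setIntegral_congr_fun (hEmeas n)
      intro ω hω
      simp only [hE, Set.mem_preimage, Set.mem_singleton_iff] at hω
      simp only [hX, hω]
    have hXU : ∫ ω in U, X ω ∂μ = S1 := by
      rw [hU, integral_biUnion_finset A (fun n _ => hEmeas n) hEdisj
        (fun n _ => hXint.integrableOn)]
      exact Finset.sum_congr rfl fun n _ => by rw [hXEn n, hIA n]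
    have hIntSplit : ∫ ω in U, X ω ∂μ + r = ∫ ω, X ω ∂μ := integral_add_compl hUmeas hXint
    have hr0 : 0 ≤ r :=
      integral_nonneg_of_ae (ae_restrict_of_ae (hXb.mono fun ω h => h.1))
    have hrle : r ≤ M * s ^ (2*K) := by
      have h1 : r ≤ ∫ _ω in Uᶜ, M ∂μ :=
        integral_mono_ae hXint.integrableOn (integrable_const M).integrableOn
          (ae_restrict_of_ae (hXb.mono fun ω h => h.2))
      rw [setIntegral_const, measureReal_def, hμUc, smul_eq_mul] at h1
      linarith [h1]
    have hEXeq : ∫ ω, X ω ∂μ = S1 + r := by rw [← hIntSplit, hXU]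
    have hS10 : 0 ≤ S1 := Finset.sum_nonneg fun n _ => mul_nonneg (hp0 n) (hc0 n)
    have hS1M : S1 ≤ M := by
      rw [← hXU]
      have h4 : ∫ ω in U, X ω ∂μ ≤ ∫ ω, X ω ∂μ :=
        setIntegral_le_integral hXint (hXb.mono fun ω h => h.1)
      have h5 : ∫ ω, X ω ∂μ ≤ M := by
        have h := integral_mono_ae hXint (integrable_const M) (hXb.mono fun ω h => h.2)
        simpa using h
      linarith
    have hS20 : 0 ≤ S2 := Finset.sum_nonneg fun n _ => mul_nonneg (hp0 n) (sq_nonneg _)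
    have hPle1 : P ≤ 1 := by rw [hPsum]; linarith
    have hvar : variance X μ = (∫ ω, X ω ^ 2 ∂μ) - (∫ ω, X ω ∂μ) ^ 2 := by
      rw [variance_eq_sub hXmem2]
      have he : (X ^ 2) = fun ω => X ω ^ 2 := rfl
      rw [he]
    have hsq : (∫ ω, X ω ∂μ) ^ 2 ≤ S1 ^ 2 + 3 * M ^ 2 * s ^ (2*K) := by
      rw [hEXeq]
      have h2 : S1 * r ≤ M * (M * s ^ (2*K)) := mul_le_mul hS1M hrle hr0 hM0.le
      have h3 : r * r ≤ (M * s ^ (2*K)) * (M * s ^ (2*K)) :=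
        mul_le_mul hrle hrle hr0 (by positivity)
      have h4 : M * s ^ (2*K) * (M * s ^ (2*K)) ≤ M ^ 2 * s ^ (2*K) := by
        nlinarith [mul_nonneg (mul_nonneg hM0.le hM0.le) hsN0]
      nlinarith [h2, h3, h4]
    have hchain1 : P * S2 - S1 ^ 2 - 3 * M ^ 2 * s ^ (2*K) ≤ variance X μ := by
      rw [hvar]
      have hPS2 : P * S2 ≤ S2 := by
        calc P * S2 ≤ 1 * S2 := mul_le_mul_of_nonneg_right hPle1 hS20
          _ = S2 := one_mul S2
      linarith [hstep1, hsq]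
    -- pairs part
    have hident := finite_var_identity A p c
    rw [← hPdef, ← hS2, ← hS1] at hident
    have hpair := pair_sum_le K (fun x : ℕ × ℕ => p x.1 * p x.2 * (c x.1 - c x.2) ^ 2)
      (fun x => mul_nonneg (mul_nonneg (hp0 _) (hp0 _)) (sq_nonneg _))
      (fun a b => by ring)
    rw [← hA] at hpair
    dsimp only at hpair
    have hhalf : ∑ y ∈ Finset.range K ×ˢ Finset.range K,
        p y.1 * p (y.1+y.2+1) * (c y.1 - c (y.1+y.2+1)) ^ 2
        ≤ P * S2 - S1 ^ 2 := by
      linarith [hpair, hident]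
    have hterm : ∀ y ∈ Finset.range K ×ˢ Finset.range K,
        LR ^ 2 * ((s^4) ^ y.1 * (s ^ (y.2+3) * (1 - s ^ (y.2+1)) ^ 2))
          ≤ p y.1 * p (y.1+y.2+1) * (c y.1 - c (y.1+y.2+1)) ^ 2 := by
      rintro ⟨n, d⟩ -
      have hgd0 : 0 ≤ ∑ j ∈ Finset.range (d+1), s ^ j := hgsum_nonneg _
      have h1 := hcincr n d
      have h10 : 0 ≤ LR * (s ^ (n+1) * ∑ j ∈ Finset.range (d+1), s ^ j) := by positivity
      have h2 : (LR * (s ^ (n+1) * ∑ j ∈ Finset.range (d+1), s ^ j)) ^ 2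
          ≤ (c (n+d+1) - c n) ^ 2 := pow_le_pow_left₀ h10 h1 2
      have h3 : (c n - c (n+d+1)) ^ 2 = (c (n+d+1) - c n) ^ 2 := by ring
      have hgg : (1 - s) * ∑ j ∈ Finset.range (d+1), s ^ j = 1 - s ^ (d+1) := hgeo (d+1)
      calc LR ^ 2 * ((s^4) ^ n * (s ^ (d+3) * (1 - s ^ (d+1)) ^ 2))
          = p n * p (n+d+1) * (LR * (s ^ (n+1) * ∑ j ∈ Finset.range (d+1), s ^ j)) ^ 2 := by
            rw [← hgg]; simp only [hp]; ring
        _ ≤ p n * p (n+d+1) * (c (n+d+1) - c n) ^ 2 :=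
            mul_le_mul_of_nonneg_left h2 (mul_nonneg (hp0 _) (hp0 _))
        _ = p n * p (n+d+1) * (c n - c (n+d+1)) ^ 2 := by rw [h3]
    have hprod : LR ^ 2 * ((∑ n ∈ Finset.range K, (s^4) ^ n) *
        (∑ d ∈ Finset.range K, s ^ (d+3) * (1 - s ^ (d+1)) ^ 2))
        = ∑ y ∈ Finset.range K ×ˢ Finset.range K,
            LR ^ 2 * ((s^4) ^ y.1 * (s ^ (y.2+3) * (1 - s ^ (y.2+1)) ^ 2)) := by
      rw [Finset.sum_product]
      simp_rw [← Finset.mul_sum]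
      rw [← Finset.sum_mul]
    have hfinal : LR ^ 2 * ((∑ n ∈ Finset.range K, (s^4) ^ n) *
        (∑ d ∈ Finset.range K, s ^ (d+3) * (1 - s ^ (d+1)) ^ 2)) ≤ P * S2 - S1 ^ 2 := by
      rw [hprod]
      exact le_trans (Finset.sum_le_sum hterm) hhalf
    linarith [hchain1, hfinal]
  -- limits
  have h1ps : (0:ℝ) < 1 + s := by linarith
  have h1s2 : (0:ℝ) < 1 - s^2 := by nlinarith
  have h1s3 : (0:ℝ) < 1 - s^3 := by nlinarith
  have h1s4 : (0:ℝ) < 1 - s^4 := by nlinarith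
  have hu : Filter.Tendsto (fun K => ∑ n ∈ Finset.range K, (s^4) ^ n)
      Filter.atTop (nhds (1 - s^4)⁻¹) :=
    (hasSum_geometric_of_lt_one (by positivity) (by nlinarith)).tendsto_sum_nat
  have hv1 : Filter.Tendsto (fun K => ∑ d ∈ Finset.range K, s ^ d)
      Filter.atTop (nhds (1 - s)⁻¹) :=
    (hasSum_geometric_of_lt_one hs0.le hs1).tendsto_sum_nat
  have hv2 : Filter.Tendsto (fun K => ∑ d ∈ Finset.range K, (s^2) ^ d)
      Filter.atTop (nhds (1 - s^2)⁻¹) :=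
    (hasSum_geometric_of_lt_one (by positivity) (by nlinarith)).tendsto_sum_nat
  have hv3 : Filter.Tendsto (fun K => ∑ d ∈ Finset.range K, (s^3) ^ d)
      Filter.atTop (nhds (1 - s^3)⁻¹) :=
    (hasSum_geometric_of_lt_one (by positivity) (by nlinarith)).tendsto_sum_nat
  have hveq : ∀ K : ℕ, ∑ d ∈ Finset.range K, s ^ (d+3) * (1 - s ^ (d+1)) ^ 2
      = s^3 * (∑ d ∈ Finset.range K, s ^ d) - 2*s^4 * (∑ d ∈ Finset.range K, (s^2) ^ d)
        + s^5 * (∑ d ∈ Finset.range K, (s^3) ^ d) := by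
    intro K
    rw [Finset.mul_sum, Finset.mul_sum, Finset.mul_sum, ← Finset.sum_sub_distrib,
      ← Finset.sum_add_distrib]
    refine Finset.sum_congr rfl fun d _ => ?_
    ring
  have hvlim : Filter.Tendsto (fun K => ∑ d ∈ Finset.range K, s ^ (d+3) * (1 - s ^ (d+1)) ^ 2)
      Filter.atTop (nhds (s^3 * (1 - s)⁻¹ - 2*s^4 * (1 - s^2)⁻¹ + s^5 * (1 - s^3)⁻¹)) := by
    simp_rw [hveq]
    exact ((hv1.const_mul _).sub (hv2.const_mul _)).add (hv3.const_mul _)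
  have htail : Filter.Tendsto (fun K => 3 * M ^ 2 * s ^ (2*K)) Filter.atTop (nhds 0) := by
    have h0 : Filter.Tendsto (fun K : ℕ => (s^2) ^ K) Filter.atTop (nhds 0) :=
      tendsto_pow_atTop_nhds_zero_of_lt_one (by positivity) (by nlinarith)
    have h1 := h0.const_mul (3 * M ^ 2)
    simp only [mul_zero] at h1
    have he : (fun K : ℕ => 3 * M ^ 2 * s ^ (2*K)) = fun K : ℕ => 3 * M ^ 2 * (s^2) ^ K := by
      funext K; rw [pow_mul]
    rw [he]
    exact h1
  have hlim : Filter.Tendsto (fun K => LR ^ 2 * ((∑ n ∈ Finset.range K, (s^4) ^ n) *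
      (∑ d ∈ Finset.range K, s ^ (d+3) * (1 - s ^ (d+1)) ^ 2)) - 3 * M ^ 2 * s ^ (2*K))
      Filter.atTop (nhds (LR ^ 2 * ((1 - s^4)⁻¹ *
        (s^3 * (1 - s)⁻¹ - 2*s^4 * (1 - s^2)⁻¹ + s^5 * (1 - s^3)⁻¹)) - 0)) :=
    ((hu.mul hvlim).const_mul _).sub htail
  have hle := le_of_tendsto hlim (Filter.Eventually.of_forall main)
  refine le_trans (le_of_eq ?_) hle
  rw [sub_zero]
  field_simp
  ring


/-- Uniform variance lower bound for the random-horizon Monte-Carlo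
estimator when rewards are strictly positive: if `L_R ≤ R_t ≤ U_R` a.s. and
`T ~ Geom(1 − √γ)` is independent of the rewards, then
`Var(∑_{t=0}^T γ^{t/2} R_t) ≥ L_R² γ³ (1 − √γ) / ((1 − γ^{3/2})(1 − γ)²)`. -/
theorem random_horizon_estimator_variance_lower_bound
    {Ω : Type*} {mΩ : MeasurableSpace Ω} (μ : Measure Ω) [IsProbabilityMeasure μ]
    (γ LR UR : ℝ) (hγ : γ ∈ Set.Ioo (0 : ℝ) 1) (hLR : 0 < LR) (hLRUR : LR ≤ UR)
    (R : ℕ → Ω → ℝ) (hRmeas : ∀ t, Measurable (R t))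
    (hRbdd : ∀ t, ∀ᵐ ω ∂μ, LR ≤ R t ω ∧ R t ω ≤ UR)
    (T : Ω → ℕ) (hTmeas : Measurable T)
    (hTdist : ∀ t : ℕ, μ {ω | T ω = t} =
      ENNReal.ofReal ((1 - Real.sqrt γ) * Real.sqrt γ ^ t))
    (hindep : Indep (MeasurableSpace.comap T inferInstance)
      (⨆ t : ℕ, MeasurableSpace.comap (R t) inferInstance) μ) :
    LR ^ 2 * γ ^ 3 * (1 - Real.sqrt γ) / ((1 - Real.sqrt γ ^ 3) * (1 - γ) ^ 2) ≤
      variance (fun ω => ∑ t ∈ Finset.range (T ω + 1), Real.sqrt γ ^ t * R t ω) μ := by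
  obtain ⟨hγ0, hγ1⟩ := hγ
  set s := Real.sqrt γ with hs
  have hs0 : 0 < s := Real.sqrt_pos.2 hγ0
  have hs1 : s < 1 := by
    have := Real.sqrt_lt_sqrt (le_of_lt hγ0) hγ1
    simpa [Real.sqrt_one] using this
  have hγs : s ^ 2 = γ := Real.sq_sqrt (le_of_lt hγ0)
  have key := aux_var_lower_bound μ s LR UR hs0 hs1 hLR hLRUR R hRmeas hRbdd T hTmeas
    hTdist hindep
  refine le_trans ?_ key
  have h1ms : (0:ℝ) < 1 - s := by linarith
  have hD : (0:ℝ) < (1 - s) ^ 2 * (1 + s) ^ 2 * (1 + s + s ^ 2) := by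
    have h2 : (0:ℝ) < 1 + s := by linarith
    have h3 : (0:ℝ) < 1 + s + s ^ 2 := by positivity
    positivity
  have h1s3 : (0:ℝ) < 1 - s ^ 3 := by nlinarith
  have h1γ : (0:ℝ) < 1 - γ := by linarith
  have heq : LR ^ 2 * γ ^ 3 * (1 - s) / ((1 - s ^ 3) * (1 - γ) ^ 2)
      = LR ^ 2 * s ^ 6 / ((1 - s) ^ 2 * (1 + s) ^ 2 * (1 + s + s ^ 2)) := by
    rw [← hγs]
    have h1s2 : (0:ℝ) < 1 - s ^ 2 := by nlinarith
    rw [div_eq_div_iff (mul_pos h1s3 (pow_pos h1s2 2)).ne' hD.ne']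
    ring
  rw [heq, div_le_div_iff_of_pos_right hD]
  have h36 : s ^ 6 ≤ s ^ 3 := pow_le_pow_of_le_one hs0.le hs1.le (by norm_num)
  nlinarith [sq_nonneg LR]
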